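/- Let e₀, e₁ ∈ ℂ, let J ∈ ℂ[z] be a nonzero polynomial, and let Ω(w) = w^{e₀}·(1−w)^{e₁} be defined via the principal branch of the complex power, which is analytic on ℂ with the rays (−∞,0] and [1,+∞) removed. Let c ∈ ℂ and ρ > 0 be such that every point w of the circle |w − c| = ρ satisfies w ∉ (−∞,0], w ∉ [1,+∞) and J(w) ≠ 0. Then for every polynomial R ∈ ℂ[z], the circle integral ∮_{|w−c|=ρ} T(R)(w)·Ω(w)/J(w)² dw = 0. -/

import Mathlib

open Polynomial

/-- The operator `T(R) = z(1−z)·J·R′ + ((e₀+1 − (e₀+e₁+2)z)·J + z(z−1)·J′)·R`. -/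
noncomputable def T (e₀ e₁ : ℂ) (J R : ℂ[X]) : ℂ[X] :=
  X * (1 - X) * J * derivative R +
    ((C (e₀ + 1) - C (e₀ + e₁ + 2) * X) * J + X * (X - 1) * derivative J) * R

/-- If every point `w` of the circle `|w − c| = ρ` avoids the rays `(−∞,0]` and
`[1,+∞)` and the zeros of `J`, then for every polynomial `R` the circle integral of
`T(R)(w)·w^{e₀}·(1−w)^{e₁}/J(w)²` (principal branch powers) vanishes. -/
theorem stmt_13 (e₀ e₁ : ℂ) (J : ℂ[X]) (hJ : J ≠ 0) (c : ℂ) (ρ : ℝ) (hρ : 0 < ρ)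
    (hcirc : ∀ w : ℂ, ‖w - c‖ = ρ →
      (w.im ≠ 0 ∨ 0 < w.re) ∧ (w.im ≠ 0 ∨ w.re < 1) ∧ J.eval w ≠ 0) :
    ∀ R : ℂ[X],
      (∮ w in C(c, ρ), (T e₀ e₁ J R).eval w * (w ^ e₀ * (1 - w) ^ e₁) / (J.eval w) ^ 2)
        = 0 := by
  intro R
  set F : ℂ → ℂ := fun w => R.eval w * (w ^ (e₀ + 1) * (1 - w) ^ (e₁ + 1)) / J.eval w with hF
  apply circleIntegral.integral_eq_zero_of_hasDerivWithinAt (f := F) hρ.le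
  intro w hw
  rw [Metric.mem_sphere, Complex.dist_eq] at hw
  obtain ⟨h0, h1, hJw⟩ := hcirc w hw
  have hw0 : w ∈ Complex.slitPlane := Complex.mem_slitPlane_iff.2 h0.symm
  have hw1 : (1 - w) ∈ Complex.slitPlane := by
    rw [Complex.mem_slitPlane_iff]
    rcases h1 with h | h
    · right; simpa [Complex.sub_im] using h
    · left; simp [Complex.sub_re]; linarith
  have hwne : w ≠ 0 := Complex.slitPlane_ne_zero hw0
  have hwne1 : (1 : ℂ) - w ≠ 0 := Complex.slitPlane_ne_zero hw1
  -- derivatives of the pieces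
  have hp1 : HasDerivAt (fun w : ℂ => w ^ (e₀ + 1))
      ((e₀ + 1) * w ^ e₀ * 1) w := by
    have := (hasDerivAt_id w).cpow_const (c := e₀ + 1) hw0
    simpa using this
  have hp2 : HasDerivAt (fun w : ℂ => (1 - w) ^ (e₁ + 1))
      ((e₁ + 1) * (1 - w) ^ e₁ * (-1)) w := by
    have hlin : HasDerivAt (fun w : ℂ => 1 - w) (-1) w := by
      simpa using (hasDerivAt_id w).const_sub 1
    have := hlin.cpow_const (c := e₁ + 1) hw1
    simpa using this
  have hR' : HasDerivAt (fun w : ℂ => R.eval w) (R.derivative.eval w) w :=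
    R.hasDerivAt w
  have hJ' : HasDerivAt (fun w : ℂ => J.eval w) (J.derivative.eval w) w :=
    J.hasDerivAt w
  have hprod : HasDerivAt (fun w : ℂ => R.eval w * (w ^ (e₀ + 1) * (1 - w) ^ (e₁ + 1)))
      (R.derivative.eval w * (w ^ (e₀ + 1) * (1 - w) ^ (e₁ + 1)) +
        R.eval w * (((e₀ + 1) * w ^ e₀ * 1) * (1 - w) ^ (e₁ + 1) +
          w ^ (e₀ + 1) * ((e₁ + 1) * (1 - w) ^ e₁ * (-1)))) w :=
    hR'.mul (hp1.mul hp2)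
  have hdiv : HasDerivAt F
      (((R.derivative.eval w * (w ^ (e₀ + 1) * (1 - w) ^ (e₁ + 1)) +
        R.eval w * (((e₀ + 1) * w ^ e₀ * 1) * (1 - w) ^ (e₁ + 1) +
          w ^ (e₀ + 1) * ((e₁ + 1) * (1 - w) ^ e₁ * (-1)))) * J.eval w -
        R.eval w * (w ^ (e₀ + 1) * (1 - w) ^ (e₁ + 1)) * J.derivative.eval w) /
        (J.eval w) ^ 2) w :=
    hprod.div hJ' hJw
  have key : ((R.derivative.eval w * (w ^ (e₀ + 1) * (1 - w) ^ (e₁ + 1)) +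
        R.eval w * (((e₀ + 1) * w ^ e₀ * 1) * (1 - w) ^ (e₁ + 1) +
          w ^ (e₀ + 1) * ((e₁ + 1) * (1 - w) ^ e₁ * (-1)))) * J.eval w -
        R.eval w * (w ^ (e₀ + 1) * (1 - w) ^ (e₁ + 1)) * J.derivative.eval w) /
        (J.eval w) ^ 2
      = (T e₀ e₁ J R).eval w * (w ^ e₀ * (1 - w) ^ e₁) / (J.eval w) ^ 2 := by
    have e1 : w ^ (e₀ + 1) = w ^ e₀ * w := by
      rw [Complex.cpow_add _ _ hwne, Complex.cpow_one]
    have e2 : (1 - w) ^ (e₁ + 1) = (1 - w) ^ e₁ * (1 - w) := by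
      rw [Complex.cpow_add _ _ hwne1, Complex.cpow_one]
    rw [e1, e2]
    simp only [T, eval_add, eval_mul, eval_sub, eval_one, eval_X, eval_C]
    ring
  rw [key] at hdiv
  exact hdiv.hasDerivWithinAt
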